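/- arXiv:2406.15952 — 3 statements merged into one kernel-verified Lean document; each statement's English description precedes it below -/
import Mathlib

section
/- Let E be a finite set with k elements, and let (P_n)_{n≥1} be a sequence of k×k row-stochastic matrices such that for any 0 ≤ n1 < n2, the product P_{n1+1}·P_{n1+2}⋯P_{n2} is an irreducible matrix. Then for N = 2^k − 2, every entry of the product P_1·P_2⋯P_N is strictly positive. -/
/-- A nonnegative square matrix is irreducible: for every pair of indices there is
an `m ≥ 1` such that the `(i,j)` entry of the `m`-th power is positive. -/
def MatIrreducible {k : ℕ} (M : Matrix (Fin k) (Fin k) ℝ) : Prop :=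
  ∀ i j : Fin k, ∃ m : ℕ, 1 ≤ m ∧ 0 < (M ^ m) i j

/-- A matrix is row-stochastic. -/
def RowStochastic {k : ℕ} (M : Matrix (Fin k) (Fin k) ℝ) : Prop :=
  (∀ i j, 0 ≤ M i j) ∧ (∀ i, ∑ j, M i j = 1)

/-- Product `P_{n1+1} ⋯ P_{n2}` of the matrices. -/
def matProd {k : ℕ} (P : ℕ → Matrix (Fin k) (Fin k) ℝ) (n1 n2 : ℕ) :
    Matrix (Fin k) (Fin k) ℝ :=
  ((List.range (n2 - n1)).map (fun i => P (n1 + 1 + i))).prod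

section helpers

variable {k : ℕ}

/-- All entries nonnegative. -/
def EntryNN (M : Matrix (Fin k) (Fin k) ℝ) : Prop := ∀ i j, 0 ≤ M i j

lemma entryNN_one : EntryNN (1 : Matrix (Fin k) (Fin k) ℝ) := by
  intro i j
  by_cases h : i = j <;> simp [Matrix.one_apply, h]

lemma entryNN_mul {M N : Matrix (Fin k) (Fin k) ℝ} (hM : EntryNN M) (hN : EntryNN N) :
    EntryNN (M * N) := by
  intro i j
  rw [Matrix.mul_apply]
  exact Finset.sum_nonneg fun l _ => mul_nonneg (hM i l) (hN l j)

lemma entryNN_pow {Q : Matrix (Fin k) (Fin k) ℝ} (hQ : EntryNN Q) :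
    ∀ m, EntryNN (Q ^ m)
  | 0 => by simpa [pow_zero] using (entryNN_one (k := k))
  | m + 1 => by rw [pow_succ]; exact entryNN_mul (entryNN_pow hQ m) hQ

lemma mul_pos_iff' {M N : Matrix (Fin k) (Fin k) ℝ} (hM : EntryNN M) (hN : EntryNN N)
    (i j : Fin k) : 0 < (M * N) i j ↔ ∃ l, 0 < M i l ∧ 0 < N l j := by
  rw [Matrix.mul_apply]
  constructor
  · intro h
    by_contra hc
    push_neg at hc
    have hz : ∀ l ∈ Finset.univ, M i l * N l j = 0 := by
      intro l _
      rcases lt_or_eq_of_le (hM i l) with h1 | h1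
      · have h2 : N l j = 0 := le_antisymm (hc l h1) (hN l j)
        simp [h2]
      · simp [← h1]
    rw [Finset.sum_eq_zero hz] at h
    exact lt_irrefl 0 h
  · rintro ⟨l, h1, h2⟩
    exact Finset.sum_pos' (fun x _ => mul_nonneg (hM i x) (hN x j))
      ⟨l, Finset.mem_univ l, mul_pos h1 h2⟩

lemma matProd_self (P : ℕ → Matrix (Fin k) (Fin k) ℝ) (n : ℕ) : matProd P n n = 1 := by
  simp [matProd]

lemma matProd_succ (P : ℕ → Matrix (Fin k) (Fin k) ℝ) {n1 n2 : ℕ} (h : n1 ≤ n2) :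
    matProd P n1 (n2 + 1) = matProd P n1 n2 * P (n2 + 1) := by
  unfold matProd
  have h1 : n2 + 1 - n1 = (n2 - n1) + 1 := by omega
  rw [h1, List.range_succ, List.map_append, List.prod_append]
  have h2 : n1 + 1 + (n2 - n1) = n2 + 1 := by omega
  simp [h2]

lemma matProd_one_step (P : ℕ → Matrix (Fin k) (Fin k) ℝ) (n : ℕ) :
    matProd P n (n + 1) = P (n + 1) := by
  rw [matProd_succ P (le_refl n), matProd_self, one_mul]

lemma matProd_nn {P : ℕ → Matrix (Fin k) (Fin k) ℝ}
    (hP : ∀ n, 1 ≤ n → RowStochastic (P n)) (n1 n2 : ℕ) :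
    EntryNN (matProd P n1 n2) := by
  unfold matProd
  induction n2 - n1 with
  | zero => simpa using (entryNN_one (k := k))
  | succ m ih =>
    rw [List.range_succ, List.map_append, List.prod_append]
    simp only [List.map_cons, List.map_nil, List.prod_cons, List.prod_nil, mul_one]
    exact entryNN_mul ih (hP (n1 + 1 + m) (by omega)).1

lemma matProd_split (P : ℕ → Matrix (Fin k) (Fin k) ℝ) {a b c : ℕ}
    (hab : a ≤ b) (hbc : b ≤ c) :
    matProd P a c = matProd P a b * matProd P b c := by
  induction c, hbc using Nat.le_induction with
  | base => rw [matProd_self, mul_one]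
  | succ c hbc ih =>
    rw [matProd_succ P (le_trans hab hbc), matProd_succ P hbc, ih, mul_assoc]

lemma irr_closed {Q : Matrix (Fin k) (Fin k) ℝ} (hQ : EntryNN Q)
    (hirrQ : MatIrreducible Q) {A : Finset (Fin k)} (hA : A.Nonempty)
    (hcl : ∀ l ∈ A, ∀ j, 0 < Q l j → j ∈ A) : A = Finset.univ := by
  have key : ∀ m, ∀ l ∈ A, ∀ j, 0 < (Q ^ m) l j → j ∈ A := by
    intro m
    induction m with
    | zero =>
      intro l hl j hj
      rw [pow_zero] at hj
      have hlj : l = j := by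
        by_contra h
        rw [Matrix.one_apply_ne h] at hj
        exact lt_irrefl 0 hj
      exact hlj ▸ hl
    | succ m ih =>
      intro l hl j hj
      rw [pow_succ] at hj
      obtain ⟨x, h1, h2⟩ := (mul_pos_iff' (entryNN_pow hQ m) hQ l j).1 hj
      exact hcl x (ih l hl x h1) j h2
  obtain ⟨l0, hl0⟩ := hA
  apply Finset.eq_univ_iff_forall.2
  intro j
  obtain ⟨m, _, hm⟩ := hirrQ l0 j
  exact key m l0 hl0 j hm

lemma row_pos {M : Matrix (Fin k) (Fin k) ℝ} (hM : RowStochastic M) (l : Fin k) :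
    ∃ j, 0 < M l j := by
  by_contra h
  push_neg at h
  have hz : ∑ j, M l j = 0 := Finset.sum_eq_zero fun j _ => le_antisymm (h j) (hM.1 l j)
  rw [hM.2 l] at hz
  norm_num at hz

lemma col_pos {P : ℕ → Matrix (Fin k) (Fin k) ℝ}
    (hP : ∀ n, 1 ≤ n → RowStochastic (P n))
    (hirr : ∀ n1 n2 : ℕ, n1 < n2 → MatIrreducible (matProd P n1 n2)) (n : ℕ) (j : Fin k) :
    ∃ l, 0 < P (n + 1) l j := by
  obtain ⟨m, hm1, hm2⟩ := hirr n (n + 1) (by omega) j j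
  rw [matProd_one_step] at hm2
  obtain ⟨m', rfl⟩ : ∃ m', m = m' + 1 := ⟨m - 1, by omega⟩
  rw [pow_succ] at hm2
  have hQ : EntryNN (P (n + 1)) := (hP (n + 1) (by omega)).1
  obtain ⟨l, _, h2⟩ := (mul_pos_iff' (entryNN_pow hQ m') hQ j j).1 hm2
  exact ⟨l, h2⟩

end helpers

theorem strong_primitivity_bound {k : ℕ}
    (P : ℕ → Matrix (Fin k) (Fin k) ℝ)
    (hstoch : ∀ n, 1 ≤ n → RowStochastic (P n))
    (hirr : ∀ n1 n2 : ℕ, n1 < n2 → MatIrreducible (matProd P n1 n2)) :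
    ∀ i j : Fin k, 0 < matProd P 0 (2 ^ k - 2) i j := by
  intro i j
  have hk : 0 < k := i.pos
  haveI : Nonempty (Fin k) := ⟨i⟩
  set N := 2 ^ k - 2 with hN
  set S : ℕ → Finset (Fin k) :=
    fun n => Finset.univ.filter fun j' => 0 < matProd P 0 n i j' with hSdef
  have memS : ∀ n j', j' ∈ S n ↔ 0 < matProd P 0 n i j' := by
    intro n j'; simp [hSdef]
  have hSstep : ∀ a b, a ≤ b → ∀ j',
      (j' ∈ S b ↔ ∃ l ∈ S a, 0 < matProd P a b l j') := by
    intro a b hab j'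
    rw [memS, matProd_split P (Nat.zero_le a) hab,
      mul_pos_iff' (matProd_nn hstoch 0 a) (matProd_nn hstoch a b)]
    simp only [memS]
  have hne : ∀ n, (S n).Nonempty := by
    intro n
    induction n with
    | zero =>
      refine ⟨i, (memS 0 i).2 ?_⟩
      rw [matProd_self]
      simp [Matrix.one_apply]
    | succ n ih =>
      obtain ⟨l, hl⟩ := ih
      obtain ⟨j0, hj0⟩ := row_pos (hstoch (n + 1) (by omega)) l
      refine ⟨j0, (hSstep n (n + 1) (by omega) j0).2 ⟨l, hl, ?_⟩⟩
      rwa [matProd_one_step]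
  have hfull : ∀ n m, n ≤ m → S n = Finset.univ → S m = Finset.univ := by
    intro n m hnm
    induction m, hnm using Nat.le_induction with
    | base => exact id
    | succ m hm ih =>
      intro h
      have h' := ih h
      apply Finset.eq_univ_iff_forall.2
      intro j'
      obtain ⟨l, hl⟩ := col_pos hstoch hirr m j'
      refine (hSstep m (m + 1) (by omega) j').2 ⟨l, h' ▸ Finset.mem_univ l, ?_⟩
      rwa [matProd_one_step]
  suffices hSN : S N = Finset.univ by
    exact (memS N j).1 (Finset.eq_univ_iff_forall.1 hSN j)
  by_contra hSN
  have hproper : ∀ n ≤ N, S n ≠ Finset.univ := fun n hn h => hSN (hfull n N hn h)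
  have key : ∀ a b, a < b → b ≤ N → S a = S b → False := by
    intro a b hab hbN hEq
    have hAuniv : S a = Finset.univ := by
      apply irr_closed (matProd_nn hstoch a b) (hirr a b hab) (hne a)
      intro l hl j' hj'
      have : j' ∈ S b := (hSstep a b hab.le j').2 ⟨l, hl, hj'⟩
      rwa [← hEq] at this
    exact hproper a (by omega) hAuniv
  set t : Finset (Finset (Fin k)) :=
    (Finset.univ.erase ∅).erase Finset.univ with ht
  have h2k : 2 ≤ 2 ^ k := by
    calc 2 = 2 ^ 1 := by norm_num
    _ ≤ 2 ^ k := Nat.pow_le_pow_right (by norm_num) hk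
  have huniv_mem : Finset.univ ∈ (Finset.univ : Finset (Finset (Fin k))).erase ∅ :=
    Finset.mem_erase.2 ⟨Finset.univ_nonempty.ne_empty, Finset.mem_univ _⟩
  have hcardt : t.card = 2 ^ k - 2 := by
    rw [ht, Finset.card_erase_of_mem huniv_mem,
      Finset.card_erase_of_mem (Finset.mem_univ _), Finset.card_univ,
      Fintype.card_finset, Fintype.card_fin]
    omega
  have hmaps : ∀ n ∈ Finset.range (N + 1), S n ∈ t := by
    intro n hn
    rw [Finset.mem_range] at hn
    rw [ht, Finset.mem_erase, Finset.mem_erase]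
    exact ⟨hproper n (by omega), (hne n).ne_empty, Finset.mem_univ _⟩
  have hlt : t.card < (Finset.range (N + 1)).card := by
    rw [hcardt, Finset.card_range]
    omega
  obtain ⟨a, ha, b, hb, hab, hSab⟩ :=
    Finset.exists_ne_map_eq_of_card_lt_of_maps_to hlt hmaps
  rw [Finset.mem_range] at ha hb
  rcases hab.lt_or_gt with h | h
  · exact key a b h (by omega) hSab
  · exact key b a h (by omega) hSab.symm
end

section
/- Let Z be a bounded random variable on a probability space (Ω, F, P) and fix γ < 0. Then (1/γ) ln E[exp(γZ)] = inf over probability measures Q absolutely continuous with respect to P of { E_Q[Z] − (1/γ) H(Q ‖ P) }, where H(Q ‖ P) = E_Q[ln(dQ/dP)] is the relative entropy. -/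
open Real Finset

/-- Dual (Donsker–Varadhan) representation of the entropic utility on a finite
probability space, for a negative risk-sensitivity parameter. -/
theorem entropic_dual_representation
    {Ω : Type*} [Fintype Ω]
    (P : Ω → ℝ) (hP0 : ∀ ω, 0 ≤ P ω) (hP1 : ∑ ω, P ω = 1)
    (Z : Ω → ℝ) (γ : ℝ) (hγ : γ < 0) :
    (1 / γ) * Real.log (∑ ω, P ω * Real.exp (γ * Z ω)) =
      sInf { r : ℝ | ∃ Q : Ω → ℝ,
        (∀ ω, 0 ≤ Q ω) ∧ (∑ ω, Q ω = 1) ∧ (∀ ω, P ω = 0 → Q ω = 0) ∧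
        r = (∑ ω, Q ω * Z ω) -
              (1 / γ) * ∑ ω, Q ω * Real.log (Q ω / P ω) } := by
  have hγ' : γ ≠ 0 := ne_of_lt hγ
  set C : ℝ := ∑ ω, P ω * Real.exp (γ * Z ω) with hCdef
  obtain ⟨ω0, _, hω0⟩ : ∃ ω ∈ Finset.univ, P ω ≠ 0 := by
    apply Finset.exists_ne_zero_of_sum_ne_zero
    rw [hP1]; norm_num
  have hω0' : 0 < P ω0 := lt_of_le_of_ne (hP0 ω0) (Ne.symm hω0)
  have hCpos : 0 < C := by
    calc (0:ℝ) < P ω0 * Real.exp (γ * Z ω0) := mul_pos hω0' (Real.exp_pos _)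
    _ ≤ C := Finset.single_le_sum
        (f := fun ω => P ω * Real.exp (γ * Z ω))
        (fun ω _ => mul_nonneg (hP0 ω) (Real.exp_pos _).le) (Finset.mem_univ ω0)
  set Q₀ : Ω → ℝ := fun ω => P ω * Real.exp (γ * Z ω) / C with hQ₀def
  have hQ₀0 : ∀ ω, 0 ≤ Q₀ ω := fun ω => by
    have := mul_nonneg (hP0 ω) (Real.exp_pos (γ * Z ω)).le
    positivity
  have hQ₀1 : ∑ ω, Q₀ ω = 1 := by
    simp only [hQ₀def]
    rw [← Finset.sum_div, div_self hCpos.ne']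
  have hQ₀P : ∀ ω, P ω = 0 → Q₀ ω = 0 := fun ω h => by simp [hQ₀def, h]
  -- value at Q₀
  have hlogQ₀ : ∀ ω, Q₀ ω * Real.log (Q₀ ω / P ω)
      = Q₀ ω * (γ * Z ω - Real.log C) := by
    intro ω
    rcases eq_or_lt_of_le (hP0 ω) with h | h
    · rw [hQ₀P ω h.symm]; ring
    · have hq : Q₀ ω / P ω = Real.exp (γ * Z ω) / C := by
        simp only [hQ₀def]
        field_simp
      rw [hq, Real.log_div (Real.exp_pos _).ne' hCpos.ne', Real.log_exp]
  have hval : (∑ ω, Q₀ ω * Z ω) -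
      (1 / γ) * ∑ ω, Q₀ ω * Real.log (Q₀ ω / P ω) = (1/γ) * Real.log C := by
    have : ∑ ω, Q₀ ω * Real.log (Q₀ ω / P ω)
        = γ * (∑ ω, Q₀ ω * Z ω) - Real.log C := by
      rw [Finset.sum_congr rfl fun ω _ => hlogQ₀ ω]
      rw [Finset.mul_sum]
      have : ∀ ω, Q₀ ω * (γ * Z ω - Real.log C)
          = γ * (Q₀ ω * Z ω) - Q₀ ω * Real.log C := fun ω => by ring
      rw [Finset.sum_congr rfl fun ω _ => this ω, Finset.sum_sub_distrib,
        ← Finset.sum_mul, hQ₀1, one_mul]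
    rw [this]
    field_simp
    ring
  have hmem : (1/γ) * Real.log C ∈ { r : ℝ | ∃ Q : Ω → ℝ,
        (∀ ω, 0 ≤ Q ω) ∧ (∑ ω, Q ω = 1) ∧ (∀ ω, P ω = 0 → Q ω = 0) ∧
        r = (∑ ω, Q ω * Z ω) -
              (1 / γ) * ∑ ω, Q ω * Real.log (Q ω / P ω) } :=
    ⟨Q₀, hQ₀0, hQ₀1, hQ₀P, hval.symm⟩
  -- lower bound
  have key : ∀ Q : Ω → ℝ, (∀ ω, 0 ≤ Q ω) → (∑ ω, Q ω = 1) →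
      (∀ ω, P ω = 0 → Q ω = 0) →
      (1/γ) * Real.log C ≤ (∑ ω, Q ω * Z ω) -
        (1 / γ) * ∑ ω, Q ω * Real.log (Q ω / P ω) := by
    intro Q hQ0 hQ1 hQP
    have pt : ∀ ω, Q ω * (γ * Z ω) - Q ω * Real.log (Q ω / P ω)
        ≤ P ω * Real.exp (γ * Z ω) / C - Q ω + Q ω * Real.log C := by
      intro ω
      rcases eq_or_lt_of_le (hQ0 ω) with h | h
      · rw [← h]
        simp only [zero_mul, sub_zero, add_zero, sub_zero, zero_sub]
        have : 0 ≤ P ω * Real.exp (γ * Z ω) / C := by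
          have := mul_nonneg (hP0 ω) (Real.exp_pos (γ * Z ω)).le
          positivity
        linarith
      · have hPω : 0 < P ω := by
          rcases eq_or_lt_of_le (hP0 ω) with h' | h'
          · exact absurd (hQP ω h'.symm) (ne_of_gt h)
          · exact h'
        set x : ℝ := P ω * Real.exp (γ * Z ω) / (Q ω * C) with hxdef
        have hx : 0 < x := by
          have := mul_pos hPω (Real.exp_pos (γ * Z ω))
          have := mul_pos h hCpos
          positivity
        have h1 : Q ω * Real.log x ≤ Q ω * (x - 1) :=
          mul_le_mul_of_nonneg_left (Real.log_le_sub_one_of_pos hx) (hQ0 ω)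
        have h2 : Q ω * x = P ω * Real.exp (γ * Z ω) / C := by
          rw [hxdef]; field_simp
        have hlx : Real.log x
            = Real.log (P ω) + γ * Z ω - Real.log (Q ω) - Real.log C := by
          rw [hxdef, Real.log_div (by positivity) (by positivity),
            Real.log_mul hPω.ne' (Real.exp_pos _).ne',
            Real.log_mul h.ne' hCpos.ne', Real.log_exp]
          ring
        rw [hlx] at h1
        rw [Real.log_div h.ne' hPω.ne']
        nlinarith [h1, h2]
    have hsum := Finset.sum_le_sum (s := Finset.univ) (fun ω _ => pt ω)
    rw [Finset.sum_sub_distrib] at hsum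
    have e1 : ∑ ω, (P ω * Real.exp (γ * Z ω) / C - Q ω + Q ω * Real.log C)
        = Real.log C := by
      rw [show (fun ω => P ω * Real.exp (γ * Z ω) / C - Q ω + Q ω * Real.log C)
        = fun ω => (P ω * Real.exp (γ * Z ω) / C - Q ω) + Q ω * Real.log C from rfl]
      rw [Finset.sum_add_distrib, Finset.sum_sub_distrib, ← Finset.sum_div,
        ← hCdef, div_self hCpos.ne', hQ1, ← Finset.sum_mul, hQ1]
      ring
    have e2 : ∑ ω, Q ω * (γ * Z ω) = γ * ∑ ω, Q ω * Z ω := by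
      rw [Finset.mul_sum]
      exact Finset.sum_congr rfl fun ω _ => by ring
    rw [e1, e2] at hsum
    -- hsum : γ * A - H ≤ log C ; want (1/γ) log C ≤ A - (1/γ) H
    set A := ∑ ω, Q ω * Z ω
    set H := ∑ ω, Q ω * Real.log (Q ω / P ω)
    have h3 : (1/γ) * (γ * A - H) ≥ (1/γ) * Real.log C := by
      have hneg : (1:ℝ)/γ < 0 := by
        apply div_neg_of_pos_of_neg <;> norm_num [hγ]
      nlinarith [hsum, hneg]
    have h4 : (1/γ) * (γ * A - H) = A - (1/γ) * H := by
      field_simp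
    linarith [h3, h4.symm.le]
  refine le_antisymm ?_ ?_
  · apply le_csInf ⟨_, hmem⟩
    rintro r ⟨Q, hQ0, hQ1, hQP, rfl⟩
    exact key Q hQ0 hQ1 hQP
  · apply csInf_le
    · refine ⟨(1/γ) * Real.log C, ?_⟩
      rintro r ⟨Q, hQ0, hQ1, hQP, rfl⟩
      exact key Q hQ0 hQ1 hQP
    · exact hmem
end

section
/- Let E be a finite set and define the span seminorm ‖g‖_sp = (1/2)(max_x g(x) − min_x g(x)) for g : E → ℝ. Let T be a map on functions E → ℝ such that for some Λ ∈ (0,1), ‖T g1 − T g2‖_sp ≤ Λ ‖g1 − g2‖_sp for all g1, g2, and T(g + c·1) = T(g) + c·1 for constants c. Suppose (g_n)_{n∈ℕ} is a sequence with g_n = T g_{n+1} + λ_n·1 for constants λ_n, and sup_n ‖g_n‖_sp < ∞, and g_n(z̄) = 0 for a fixed z̄ ∈ E and all n. If w is the unique (up to additive constant) span-fixed point of T normalized by w(z̄) = 0, then g_n = w for all n and the λ_n are all equal. -/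
variable {E : Type*} [Fintype E] [Nonempty E]

/-- The span seminorm on functions `E → ℝ`. -/
noncomputable def spanNorm (g : E → ℝ) : ℝ :=
  (1 / 2) * (Finset.univ.sup' Finset.univ_nonempty g -
    Finset.univ.inf' Finset.univ_nonempty g)

lemma spanNorm_nonneg (g : E → ℝ) : 0 ≤ spanNorm g := by
  obtain ⟨x⟩ := (inferInstance : Nonempty E)
  have h1 : Finset.univ.inf' Finset.univ_nonempty g ≤ g x :=
    Finset.inf'_le _ (Finset.mem_univ x)
  have h2 : g x ≤ Finset.univ.sup' Finset.univ_nonempty g :=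
    Finset.le_sup' _ (Finset.mem_univ x)
  unfold spanNorm; linarith

lemma spanNorm_const_of_zero {g : E → ℝ} (h : spanNorm g = 0) : ∀ x y : E, g x = g y := by
  intro x y
  have hs : Finset.univ.sup' Finset.univ_nonempty g ≤
      Finset.univ.inf' Finset.univ_nonempty g := by
    unfold spanNorm at h; linarith
  have h1 : g x ≤ Finset.univ.sup' Finset.univ_nonempty g :=
    Finset.le_sup' _ (Finset.mem_univ x)
  have h2 : Finset.univ.inf' Finset.univ_nonempty g ≤ g x :=
    Finset.inf'_le _ (Finset.mem_univ x)
  have h3 : g y ≤ Finset.univ.sup' Finset.univ_nonempty g :=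
    Finset.le_sup' _ (Finset.mem_univ y)
  have h4 : Finset.univ.inf' Finset.univ_nonempty g ≤ g y :=
    Finset.inf'_le _ (Finset.mem_univ y)
  linarith

lemma sup'_shift (g : E → ℝ) (c : ℝ) :
    Finset.univ.sup' Finset.univ_nonempty (fun x => g x + c) =
      Finset.univ.sup' Finset.univ_nonempty g + c := by
  apply le_antisymm
  · exact Finset.sup'_le _ _ fun x _ => by
      have := Finset.le_sup' g (Finset.mem_univ x); linarith
  · have : Finset.univ.sup' Finset.univ_nonempty g ≤
        Finset.univ.sup' Finset.univ_nonempty (fun x => g x + c) - c :=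
      Finset.sup'_le _ _ fun x _ => by
        have h : g x + c ≤ Finset.univ.sup' Finset.univ_nonempty (fun x => g x + c) :=
          Finset.le_sup' (fun x => g x + c) (Finset.mem_univ x)
        linarith
    linarith

lemma inf'_shift (g : E → ℝ) (c : ℝ) :
    Finset.univ.inf' Finset.univ_nonempty (fun x => g x + c) =
      Finset.univ.inf' Finset.univ_nonempty g + c := by
  apply le_antisymm
  · have : Finset.univ.inf' Finset.univ_nonempty (fun x => g x + c) - c ≤
        Finset.univ.inf' Finset.univ_nonempty g :=
      le_of_le_of_eq (by
        apply Finset.le_inf'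
        intro x _
        have h : Finset.univ.inf' Finset.univ_nonempty (fun x => g x + c) ≤ g x + c :=
          Finset.inf'_le (fun x => g x + c) (Finset.mem_univ x)
        linarith) rfl
    linarith
  · exact Finset.le_inf' _ _ fun x _ => by
      have := Finset.inf'_le g (Finset.mem_univ x); linarith

lemma spanNorm_shift (g : E → ℝ) (c : ℝ) : spanNorm (fun x => g x + c) = spanNorm g := by
  unfold spanNorm; rw [sup'_shift, inf'_shift]; ring

lemma spanNorm_add_le (f g : E → ℝ) :
    spanNorm (fun x => f x + g x) ≤ spanNorm f + spanNorm g := by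
  have hs : Finset.univ.sup' Finset.univ_nonempty (fun x => f x + g x) ≤
      Finset.univ.sup' Finset.univ_nonempty f + Finset.univ.sup' Finset.univ_nonempty g :=
    Finset.sup'_le _ _ fun x _ => by
      have h1 := Finset.le_sup' f (Finset.mem_univ x)
      have h2 := Finset.le_sup' g (Finset.mem_univ x)
      exact add_le_add h1 h2
  have hi : Finset.univ.inf' Finset.univ_nonempty f + Finset.univ.inf' Finset.univ_nonempty g ≤
      Finset.univ.inf' Finset.univ_nonempty (fun x => f x + g x) :=
    Finset.le_inf' _ _ fun x _ => by
      have h1 := Finset.inf'_le f (Finset.mem_univ x)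
      have h2 := Finset.inf'_le g (Finset.mem_univ x)
      exact add_le_add h1 h2
  unfold spanNorm; linarith

lemma spanNorm_neg (g : E → ℝ) : spanNorm (fun x => -g x) = spanNorm g := by
  have hs : Finset.univ.sup' Finset.univ_nonempty (fun x => -g x) =
      -Finset.univ.inf' Finset.univ_nonempty g := by
    apply le_antisymm
    · exact Finset.sup'_le _ _ fun x _ => by
        have := Finset.inf'_le g (Finset.mem_univ x); linarith
    · rw [neg_le]
      exact Finset.le_inf' _ _ fun x _ => by
        have h : -g x ≤ Finset.univ.sup' Finset.univ_nonempty (fun x => -g x) :=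
          Finset.le_sup' (fun x => -g x) (Finset.mem_univ x)
        linarith
  have hi : Finset.univ.inf' Finset.univ_nonempty (fun x => -g x) =
      -Finset.univ.sup' Finset.univ_nonempty g := by
    apply le_antisymm
    · rw [le_neg]
      exact Finset.sup'_le _ _ fun x _ => by
        have h : Finset.univ.inf' Finset.univ_nonempty (fun x => -g x) ≤ -g x :=
          Finset.inf'_le (fun x => -g x) (Finset.mem_univ x)
        linarith
    · exact Finset.le_inf' _ _ fun x _ => by
        have := Finset.le_sup' g (Finset.mem_univ x); linarith
  unfold spanNorm; rw [hs, hi]; ring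

/-- Fixed-point argument of the vanishing-discount proof: a span-contractive,
shift-equivariant operator with a bounded backward-recursive normalized sequence
forces the sequence to equal the normalized fixed point and the constants to be
all equal. -/
theorem backward_sequence_is_fixed_point
    (T : (E → ℝ) → (E → ℝ)) (Λ : ℝ) (hΛ : Λ ∈ Set.Ioo (0 : ℝ) 1)
    (hcontr : ∀ g1 g2 : E → ℝ,
      spanNorm (fun x => T g1 x - T g2 x) ≤ Λ * spanNorm (fun x => g1 x - g2 x))
    (hshift : ∀ (g : E → ℝ) (c : ℝ), T (fun x => g x + c) = fun x => T g x + c)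
    (g : ℕ → E → ℝ) (lam : ℕ → ℝ)
    (hrec : ∀ n, g n = fun x => T (g (n + 1)) x + lam n)
    (hbound : ∃ B : ℝ, ∀ n, spanNorm (g n) ≤ B)
    (zbar : E) (hnorm : ∀ n, g n zbar = 0)
    (w : E → ℝ) (hw : spanNorm (fun x => T w x - w x) = 0) (hwz : w zbar = 0) :
    (∀ n, g n = w) ∧ (∀ n m, lam n = lam m) := by
  obtain ⟨B, hB⟩ := hbound
  obtain ⟨hΛ0, hΛ1⟩ := hΛ
  -- T w - w is constant
  have hwc : ∀ x, T w x - w x = T w zbar - w zbar := fun x =>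
    spanNorm_const_of_zero hw x zbar
  set c : ℝ := T w zbar - w zbar with hc
  -- one-step contraction towards w
  have step : ∀ n, spanNorm (fun x => g n x - w x) ≤ Λ * spanNorm (fun x => g (n+1) x - w x) := by
    intro n
    have key : (fun x => g n x - w x) =
        fun x => (T (g (n+1)) x - T w x) + (c + lam n) := by
      funext x
      have := hwc x
      rw [hrec n]
      simp only
      linarith
    calc spanNorm (fun x => g n x - w x)
        = spanNorm (fun x => T (g (n+1)) x - T w x) := by rw [key, spanNorm_shift]
      _ ≤ Λ * spanNorm (fun x => g (n+1) x - w x) := hcontr _ _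
  -- uniform bound
  have bnd : ∀ m, spanNorm (fun x => g m x - w x) ≤ B + spanNorm w := by
    intro m
    have h1 : spanNorm (fun x => g m x - w x) ≤ spanNorm (g m) + spanNorm (fun x => -w x) := by
      have := spanNorm_add_le (g m) (fun x => -w x)
      simpa [sub_eq_add_neg] using this
    rw [spanNorm_neg] at h1
    linarith [hB m]
  -- iterate
  have iter : ∀ n k, spanNorm (fun x => g n x - w x) ≤ Λ ^ k * (B + spanNorm w) := by
    intro n k
    induction k generalizing n with
    | zero => simpa using bnd n
    | succ k ih =>
        calc spanNorm (fun x => g n x - w x)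
            ≤ Λ * spanNorm (fun x => g (n+1) x - w x) := step n
          _ ≤ Λ * (Λ ^ k * (B + spanNorm w)) := by
              exact mul_le_mul_of_nonneg_left (ih (n+1)) (le_of_lt hΛ0)
          _ = Λ ^ (k+1) * (B + spanNorm w) := by ring
  have hzero : ∀ n, spanNorm (fun x => g n x - w x) = 0 := by
    intro n
    have htend : Filter.Tendsto (fun k => Λ ^ k * (B + spanNorm w)) Filter.atTop (nhds 0) := by
      have := tendsto_pow_atTop_nhds_zero_of_lt_one (le_of_lt hΛ0) hΛ1
      simpa using this.mul_const (B + spanNorm w)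
    have hle : spanNorm (fun x => g n x - w x) ≤ 0 :=
      ge_of_tendsto' htend (fun k => iter n k)
    exact le_antisymm hle (spanNorm_nonneg _)
  have heq : ∀ n, g n = w := by
    intro n
    funext x
    have := spanNorm_const_of_zero (hzero n) x zbar
    have h0 : g n zbar - w zbar = 0 := by rw [hnorm n, hwz]; ring
    have : g n x - w x = 0 := by rw [this, h0]
    linarith
  refine ⟨heq, fun n m => ?_⟩
  obtain ⟨x⟩ := (inferInstance : Nonempty E)
  have hn : lam n = w x - T w x := by
    have := congrFun (hrec n) x
    rw [heq n, heq (n+1)] at this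
    linarith
  have hm : lam m = w x - T w x := by
    have := congrFun (hrec m) x
    rw [heq m, heq (m+1)] at this
    linarith
  rw [hn, hm]
end
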